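/- Every K45_n-consistent basic formula of maximal a-depth k and b-depth j is satisfiable at some (k,j)-model of the k-structures semantics. -/

import Mathlib

abbrev Atom := ℕ
abbrev World := Set Atom

/-- `KStr k` : the type of `k`-structures. A 0-structure is the trivial
empty object `PUnit.unit` (playing the role of `∅`); a `(k+1)`-structure is a
set of pairs of a world and a `k`-structure. Thus a 1-structure is a subset of
`W × {∅}`. -/
def KStr : ℕ → Type
  | 0 => PUnit
  | (k+1) => Set (World × KStr k)


def toSet {k : ℕ} (e : KStr (k+1)) : Set (World × KStr k) := e

instance {k : ℕ} : Membership (World × KStr k) (KStr (k+1)) :=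
  inferInstanceAs (Membership _ (Set (World × KStr k)))
instance {k : ℕ} : EmptyCollection (KStr (k+1)) :=
  inferInstanceAs (EmptyCollection (Set (World × KStr k)))
instance {k : ℕ} : Union (KStr (k+1)) :=
  inferInstanceAs (Union (Set (World × KStr k)))
instance {k : ℕ} : Compl (KStr (k+1)) :=
  inferInstanceAs (Compl (Set (World × KStr k)))

def unit0 : KStr 0 := PUnit.unit

/-- Formulas of the propositional multi-agent only-knowing language ONL_n
with modal operators L_a, N_a, L_b, N_b. -/
inductive Formula : Type
  | atom : Atom → Formula
  | fls  : Formula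
  | neg  : Formula → Formula
  | or   : Formula → Formula → Formula
  | La   : Formula → Formula
  | Na   : Formula → Formula
  | Lb   : Formula → Formula
  | Nb   : Formula → Formula

def Formula.and (α β : Formula) : Formula := .neg (.or (.neg α) (.neg β))
def Formula.imp (α β : Formula) : Formula := .or (.neg α) β
/-- O_a α := L_a α ∧ N_a ¬α -/
def Formula.Oa (α : Formula) : Formula := (Formula.La α).and (Formula.Na (.neg α))
/-- O_b α := L_b α ∧ N_b ¬α -/
def Formula.Ob (α : Formula) : Formula := (Formula.Lb α).and (Formula.Nb (.neg α))

/-- Satisfaction at a (k,j)-model `(ea, eb, w)`. -/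
def sat : (k : ℕ) → (j : ℕ) → KStr k → KStr j → World → Formula → Prop
  | _, _, _, _, w, .atom p => p ∈ w
  | _, _, _, _, _, .fls => False
  | k, j, ea, eb, w, .neg α => ¬ sat k j ea eb w α
  | k, j, ea, eb, w, .or α β => sat k j ea eb w α ∨ sat k j ea eb w β
  | 0, _, _, _, _, .La _ => True
  | (k+1), _, ea, _, _, .La α => ∀ p ∈ ea, sat (k+1) k ea p.2 p.1 α
  | 0, _, _, _, _, .Na _ => True
  | (k+1), _, ea, _, _, .Na α => ∀ p : World × KStr k, p ∉ ea → sat (k+1) k ea p.2 p.1 α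
  | _, 0, _, _, _, .Lb _ => True
  | k, (j+1), _, eb, _, .Lb α => ∀ p ∈ eb, sat j (j+1) p.2 eb p.1 α
  | _, 0, _, _, _, .Nb _ => True
  | k, (j+1), _, eb, _, .Nb α => ∀ p : World × KStr j, p ∉ eb → sat j (j+1) p.2 eb p.1 α

mutual
/-- a-depth of a formula -/
def depthA : Formula → ℕ
  | .atom _ => 1
  | .fls => 1
  | .neg α => depthA α
  | .or α β => max (depthA α) (depthA β)
  | .La α => depthA α
  | .Na α => depthA α
  | .Lb α => depthB α + 1
  | .Nb α => depthB α + 1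
/-- b-depth of a formula -/
def depthB : Formula → ℕ
  | .atom _ => 1
  | .fls => 1
  | .neg α => depthB α
  | .or α β => max (depthB α) (depthB β)
  | .Lb α => depthB α
  | .Nb α => depthB α
  | .La α => depthA α + 1
  | .Na α => depthA α + 1
end

/-- the restriction `e↓ₖ` of a structure -/
def restrict : (k : ℕ) → {m : ℕ} → KStr m → KStr k
  | 0, _, _ => unit0
  | (k+1), 0, _ => (∅ : Set (World × KStr k))
  | (k+1), (_+1), e => (fun p => (p.1, restrict k p.2)) '' (toSet e)

/-- validity: truth at all (k,j)-models of appropriate depth -/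
def valid (φ : Formula) : Prop :=
  ∀ (k j : ℕ), depthA φ ≤ k → depthB φ ≤ j →
    ∀ (ea : KStr k) (eb : KStr j) (w : World), sat k j ea eb w φ

def satisfiable (φ : Formula) : Prop :=
  ∃ (k j : ℕ) (ea : KStr k) (eb : KStr j) (w : World),
    depthA φ ≤ k ∧ depthB φ ≤ j ∧ sat k j ea eb w φ

/-- objective (non-modal) formulas -/
def objective : Formula → Prop
  | .atom _ => True
  | .fls => True
  | .neg α => objective α
  | .or α β => objective α ∧ objective β
  | .La _ => False
  | .Na _ => False
  | .Lb _ => False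
  | .Nb _ => False

/-- a-objective: all outermost modal operators are of agent b -/
def aObjective : Formula → Prop
  | .atom _ => True
  | .fls => True
  | .neg α => aObjective α
  | .or α β => aObjective α ∧ aObjective β
  | .La _ => False
  | .Na _ => False
  | .Lb _ => True
  | .Nb _ => True

/-- b-objective: all outermost modal operators are of agent a -/
def bObjective : Formula → Prop
  | .atom _ => True
  | .fls => True
  | .neg α => bObjective α
  | .or α β => bObjective α ∧ bObjective β
  | .La _ => True
  | .Na _ => True
  | .Lb _ => False
  | .Nb _ => False

/-- basic formulas: no N_a, N_b -/
def basic : Formula → Prop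
  | .atom _ => True
  | .fls => True
  | .neg α => basic α
  | .or α β => basic α ∧ basic β
  | .La α => basic α
  | .Lb α => basic α
  | .Na _ => False
  | .Nb _ => False

/-- set of a-objective formulas of b-depth ≤ d true at `(∅, e, w)` -/
def aTheory (d : ℕ) (e : KStr d) (w : World) : Set Formula :=
  {φ | aObjective φ ∧ depthB φ ≤ d ∧ sat 0 d unit0 e w φ}

def bTheory (d : ℕ) (e : KStr d) (w : World) : Set Formula :=
  {φ | bObjective φ ∧ depthA φ ≤ d ∧ sat d 0 e unit0 w φ}

/-- Obj⁺_a(e_a) -/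
def ObjA (d : ℕ) (ea : KStr (d+1)) : Set (Set Formula) :=
  {T | ∃ p : World × KStr d, p ∈ ea ∧ T = aTheory d p.2 p.1}

def ObjB (d : ℕ) (eb : KStr (d+1)) : Set (Set Formula) :=
  {T | ∃ p : World × KStr d, p ∈ eb ∧ T = bTheory d p.2 p.1}

/-- maximally satisfiable set of a-objective formulas of b-depth ≤ d -/
def maxSatA (d : ℕ) (S : Set Formula) : Prop :=
  (∀ φ ∈ S, aObjective φ ∧ depthB φ ≤ d) ∧
  (∃ (e : KStr d) (w : World), ∀ φ ∈ S, sat 0 d unit0 e w φ) ∧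
  (∀ ψ, aObjective ψ → depthB ψ ≤ d → ψ ∉ S →
    ¬ ∃ (e : KStr d) (w : World), ∀ φ ∈ insert ψ S, sat 0 d unit0 e w φ)

def maxSatB (d : ℕ) (S : Set Formula) : Prop :=
  (∀ φ ∈ S, bObjective φ ∧ depthA φ ≤ d) ∧
  (∃ (e : KStr d) (w : World), ∀ φ ∈ S, sat d 0 e unit0 w φ) ∧
  (∀ ψ, bObjective ψ → depthA ψ ≤ d → ψ ∉ S →
    ¬ ∃ (e : KStr d) (w : World), ∀ φ ∈ insert ψ S, sat d 0 e unit0 w φ)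

/-- `onlAux bA bB φ`: φ is admissible where `bA` records that N_a is banned
(we are in the scope of a b-modality) and `bB` that N_b is banned. -/
def onlAux : Bool → Bool → Formula → Prop
  | _, _, .atom _ => True
  | _, _, .fls => True
  | bA, bB, .neg α => onlAux bA bB α
  | bA, bB, .or α β => onlAux bA bB α ∧ onlAux bA bB β
  | bA, _, .La α => onlAux bA true α
  | bA, _, .Na α => bA = false ∧ onlAux bA true α
  | _, bB, .Lb α => onlAux true bB α
  | _, bB, .Nb α => bB = false ∧ onlAux true bB α

/-- ONL_n^- : no N_j in the scope of an L_i or N_i with i ≠ j -/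
def ONLminus (φ : Formula) : Prop := onlAux false false φ

inductive BoolComb (S : Set Formula) : Formula → Prop
  | base {φ} : φ ∈ S → BoolComb S φ
  | neg {φ} : BoolComb S φ → BoolComb S (.neg φ)
  | or {φ ψ} : BoolComb S φ → BoolComb S ψ → BoolComb S (.or φ ψ)

def stepL (S : Set Formula) : Set Formula :=
  {φ | BoolComb (S ∪ {ψ | ∃ α ∈ S, ψ = .La α ∨ ψ = .Na α ∨ ψ = .Lb α ∨ ψ = .Nb α}) φ}

/-- the hierarchy ONL_n^t (t ≥ 1), with ONL_n^1 = ONL_n^- -/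
def ONLt (t : ℕ) : Set Formula := stepL^[t-1] {φ | ONLminus φ}

def conjList : List Formula → Formula
  | [] => .neg .fls
  | (φ :: l) => φ.and (conjList l)

/-- instance of a propositional tautology -/
def Taut (φ : Formula) : Prop :=
  ∀ v : Formula → Bool, (∀ α, v (.neg α) = !v α) →
    (∀ α β, v (.or α β) = (v α || v β)) → v .fls = false → v φ = true

/-- K45_n provability (two agents) -/
inductive K45 : Formula → Prop
  | taut {φ} : Taut φ → K45 φ
  | kA (α β : Formula) : K45 ((Formula.La (α.imp β)).imp ((Formula.La α).imp (Formula.La β)))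
  | kB (α β : Formula) : K45 ((Formula.Lb (α.imp β)).imp ((Formula.Lb α).imp (Formula.Lb β)))
  | fourA (α : Formula) : K45 ((Formula.La α).imp (Formula.La (Formula.La α)))
  | fourB (α : Formula) : K45 ((Formula.Lb α).imp (Formula.Lb (Formula.Lb α)))
  | fiveA (α : Formula) : K45 ((Formula.neg (Formula.La α)).imp (Formula.La (Formula.neg (Formula.La α))))
  | fiveB (α : Formula) : K45 ((Formula.neg (Formula.Lb α)).imp (Formula.Lb (Formula.neg (Formula.Lb α))))
  | mp {α β} : K45 (α.imp β) → K45 α → K45 β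
  | necA {α} : K45 α → K45 (Formula.La α)
  | necB {α} : K45 α → K45 (Formula.Lb α)

def ConsSet (Γ : Set Formula) : Prop :=
  ∀ l : List Formula, (∀ φ ∈ l, φ ∈ Γ) → ¬ K45 (Formula.neg (conjList l))

/-- basic maximally K45_n-consistent set -/
def MCS (Γ : Set Formula) : Prop :=
  (∀ φ ∈ Γ, basic φ) ∧ ConsSet Γ ∧ ∀ φ, basic φ → (φ ∈ Γ ∨ Formula.neg φ ∈ Γ)

/-- worlds of the K45_n canonical model -/
def CW := {Γ : Set Formula // MCS Γ}

def RA (Γ Δ : CW) : Prop := ∀ α, Formula.La α ∈ Γ.val → α ∈ Δ.val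
def RB (Γ Δ : CW) : Prop := ∀ α, Formula.Lb α ∈ Γ.val → α ∈ Δ.val

/-- truth of basic formulas at a world of the canonical model -/
def csat (Γ : CW) : Formula → Prop
  | .atom p => Formula.atom p ∈ Γ.val
  | .fls => False
  | .neg α => ¬ csat Γ α
  | .or α β => csat Γ α ∨ csat Γ β
  | .La α => ∀ Δ : CW, RA Γ Δ → csat Δ α
  | .Lb α => ∀ Δ : CW, RB Γ Δ → csat Δ α
  | .Na _ => True
  | .Nb _ => True

/-- the propositional valuation [w] of a canonical world -/
def wval (Γ : CW) : World := {p | Formula.atom p ∈ Γ.val}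

/-- the (k,j)-correspondence structures; `corr true` is agent a's structure,
`corr false` agent b's -/
def corr : Bool → (k : ℕ) → CW → KStr k
  | _, 0, _ => unit0
  | ag, (k+1), Γ =>
    {p : World × KStr k |
      ∃ Δ : CW, (if ag then RA Γ Δ else RB Γ Δ) ∧ p.1 = wval Δ ∧ p.2 = corr (!ag) k Δ}

deriving instance DecidableEq for Formula

namespace Aux
open Formula

/-! ### Propositional combinators -/

lemma taut2 (f : Formula → Formula → Formula)
    (h : ∀ x y : Bool, ∀ v : Formula → Bool, (∀ α, v (.neg α) = !v α) →
      (∀ α β, v (.or α β) = (v α || v β)) → v .fls = false →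
      v a = x → v b = y → v (f a b) = true) : K45 (f a b) :=
  K45.taut (fun v hn ho hf => h (v a) (v b) v hn ho hf rfl rfl)

lemma k45_imp_trans {a b c : Formula} (h1 : K45 (a.imp b)) (h2 : K45 (b.imp c)) :
    K45 (a.imp c) := by
  have t : K45 ((a.imp b).imp ((b.imp c).imp (a.imp c))) := K45.taut (by
    intro v hn ho hf
    simp only [Formula.imp, ho, hn]
    cases v a <;> cases v b <;> cases v c <;> simp)
  exact (t.mp h1).mp h2

lemma k45_imp_intro {a b : Formula} (h : K45 b) : K45 (a.imp b) := by
  have t : K45 (b.imp (a.imp b)) := K45.taut (by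
    intro v hn ho hf
    simp only [Formula.imp, ho, hn]
    cases v a <;> cases v b <;> simp)
  exact t.mp h

lemma k45_neg_of_imp {a b : Formula} (h1 : K45 (a.imp b)) (h2 : K45 (.neg b)) :
    K45 (.neg a) := by
  have t : K45 ((a.imp b).imp ((Formula.neg b).imp (.neg a))) := K45.taut (by
    intro v hn ho hf
    simp only [Formula.imp, ho, hn]
    cases v a <;> cases v b <;> simp)
  exact (t.mp h1).mp h2

lemma conj_nil_prov : K45 (conjList []) := by
  show K45 (Formula.neg .fls)
  exact K45.taut (by intro v hn ho hf; simp [hn, hf])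

lemma k45_imp_and {g a c : Formula} (h1 : K45 (g.imp a)) (h2 : K45 (g.imp c)) :
    K45 (g.imp (a.and c)) := by
  have t : K45 ((g.imp a).imp ((g.imp c).imp (g.imp (a.and c)))) := K45.taut (by
    intro v hn ho hf
    simp only [Formula.imp, Formula.and, ho, hn]
    cases v g <;> cases v a <;> cases v c <;> simp)
  exact (t.mp h1).mp h2

lemma conj_imp_mem {l : List Formula} {φ : Formula} (h : φ ∈ l) :
    K45 ((conjList l).imp φ) := by
  induction l with
  | nil => simp at h
  | cons a l ih =>
    rcases List.mem_cons.mp h with rfl | h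
    · exact K45.taut (by
        intro v hn ho hf
        simp only [conjList, Formula.imp, Formula.and, ho, hn]
        cases v φ <;> simp)
    · have head : K45 ((conjList (a :: l)).imp (conjList l)) := K45.taut (by
        intro v hn ho hf
        simp only [conjList, Formula.imp, Formula.and, ho, hn]
        cases v a <;> cases v (conjList l) <;> simp)
      exact k45_imp_trans head (ih h)

lemma conj_subset {l l' : List Formula} (h : ∀ φ ∈ l, φ ∈ l') :
    K45 ((conjList l').imp (conjList l)) := by
  induction l with
  | nil => exact k45_imp_intro conj_nil_prov
  | cons a l ih =>
    exact k45_imp_and (conj_imp_mem (h a List.mem_cons_self))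
      (ih fun φ hφ => h φ (List.mem_cons_of_mem _ hφ))

/-! ### Consistency lemmas -/

lemma consSet_singleton {α : Formula} (hc : ¬ K45 (Formula.neg α)) : ConsSet {α} := by
  intro l hl hKl
  apply hc
  have h1 : K45 ((conjList [α]).imp (conjList l)) :=
    conj_subset (fun φ hφ => by simpa using hl φ hφ)
  have h2 : K45 (.neg (conjList [α])) := k45_neg_of_imp h1 hKl
  have h3 : K45 ((Formula.neg (conjList [α])).imp (.neg α)) := K45.taut (by
    intro v hn ho hf
    simp only [conjList, Formula.imp, Formula.and, ho, hn, hf]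
    cases v α <;> simp)
  exact h3.mp h2

lemma not_consSet_insert {φ : Formula} {Γ : Set Formula} (h : ¬ ConsSet (insert φ Γ)) :
    ∃ l : List Formula, (∀ ψ ∈ l, ψ ∈ Γ) ∧ K45 (Formula.neg (conjList (φ :: l))) := by
  simp only [ConsSet, not_forall, not_not] at h
  obtain ⟨l, hl, hK⟩ := h
  refine ⟨l.filter (· ≠ φ), fun ψ hψ => ?_, ?_⟩
  · have := List.mem_filter.mp hψ
    rcases hl ψ this.1 with h | h
    · simp at this; exact absurd h this.2
    · exact h
  · refine k45_neg_of_imp (conj_subset fun ψ hψ => ?_) hK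
    by_cases hψφ : ψ = φ
    · simp [hψφ]
    · exact List.mem_cons_of_mem _ (List.mem_filter.mpr ⟨hψ, by simp [hψφ]⟩)

/-! ### Lindenbaum -/

lemma chain_bound {c : Set (Set Formula)} (hc : IsChain (· ⊆ ·) c) {t₀ : Set Formula}
    (ht₀ : t₀ ∈ c) (l : List Formula) (h : ∀ φ ∈ l, φ ∈ ⋃₀ c) :
    ∃ t ∈ c, ∀ φ ∈ l, φ ∈ t := by
  induction l with
  | nil => exact ⟨t₀, ht₀, by simp⟩
  | cons a l ih =>
    obtain ⟨t, htc, ht⟩ := ih (fun φ hφ => h φ (List.mem_cons_of_mem _ hφ))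
    obtain ⟨s, hsc, has⟩ := h a List.mem_cons_self
    rcases eq_or_ne s t with rfl | hne
    · exact ⟨s, hsc, by
        intro φ hφ; rcases List.mem_cons.mp hφ with rfl | hφ
        exacts [has, ht φ hφ]⟩
    · rcases hc hsc htc hne with hst | hts
      · exact ⟨t, htc, by
          intro φ hφ; rcases List.mem_cons.mp hφ with rfl | hφ
          exacts [hst has, ht φ hφ]⟩
      · exact ⟨s, hsc, by
          intro φ hφ; rcases List.mem_cons.mp hφ with rfl | hφ
          exacts [has, hts (ht φ hφ)]⟩

lemma lindenbaum {S : Set Formula} (hb : ∀ φ ∈ S, basic φ) (hc : ConsSet S) :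
    ∃ Γ : CW, S ⊆ Γ.val := by
  set F : Set (Set Formula) := {T | S ⊆ T ∧ (∀ φ ∈ T, basic φ) ∧ ConsSet T} with hF
  have hchainH : ∀ c ⊆ F, IsChain (· ⊆ ·) c → c.Nonempty →
      ∃ ub ∈ F, ∀ s ∈ c, s ⊆ ub := by
    rintro c hcF hchain ⟨t₀, ht₀⟩
    refine ⟨⋃₀ c, ⟨(hcF ht₀).1.trans (Set.subset_sUnion_of_mem ht₀),
      fun φ hφ => ?_, fun l hl hK => ?_⟩, fun s hs => Set.subset_sUnion_of_mem hs⟩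
    · obtain ⟨t, htc, hφt⟩ := hφ
      exact (hcF htc).2.1 φ hφt
    · obtain ⟨t, htc, ht⟩ := chain_bound hchain ht₀ l hl
      exact (hcF htc).2.2 l ht hK
  obtain ⟨M, hSM, hmax⟩ := zorn_subset_nonempty F hchainH S ⟨Set.Subset.rfl, hb, hc⟩
  have hMF : M ∈ F := hmax.1
  have hMmax : ∀ T ∈ F, M ⊆ T → T ⊆ M := fun T hT hMT => hmax.2 hT hMT
  have hMCS : MCS M := by
    refine ⟨hMF.2.1, hMF.2.2, fun φ hφb => ?_⟩
    by_contra hcon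
    push_neg at hcon
    obtain ⟨hφ, hnφ⟩ := hcon
    have hins : ∀ ψ, basic ψ → ψ ∉ M → ¬ ConsSet (insert ψ M) := by
      intro ψ hψb hψ hCons
      have : insert ψ M ∈ F :=
        ⟨hMF.1.trans (Set.subset_insert _ _),
         fun χ hχ => by rcases hχ with rfl | hχ; exacts [hψb, hMF.2.1 χ hχ], hCons⟩
      exact hψ (hMmax _ this (Set.subset_insert _ _) (Set.mem_insert _ _))
    obtain ⟨l₁, hl₁, hK₁⟩ := not_consSet_insert (hins φ hφb hφ)
    obtain ⟨l₂, hl₂, hK₂⟩ := not_consSet_insert (hins (.neg φ) hφb hnφ)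
    set m := l₁ ++ l₂ with hm
    have hK₁' : K45 (Formula.neg (conjList (φ :: m))) :=
      k45_neg_of_imp (conj_subset (by
        intro ψ hψ; rcases List.mem_cons.mp hψ with rfl | hψ
        · exact List.mem_cons_self
        · exact List.mem_cons_of_mem _ (List.mem_append_left _ hψ))) hK₁
    have hK₂' : K45 (Formula.neg (conjList (Formula.neg φ :: m))) :=
      k45_neg_of_imp (conj_subset (by
        intro ψ hψ; rcases List.mem_cons.mp hψ with rfl | hψ
        · exact List.mem_cons_self
        · exact List.mem_cons_of_mem _ (List.mem_append_right _ hψ))) hK₂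
    have t : K45 ((Formula.neg (conjList (φ :: m))).imp
        ((Formula.neg (conjList (Formula.neg φ :: m))).imp (.neg (conjList m)))) :=
      K45.taut (by
        intro v hn ho hf
        simp only [conjList, Formula.imp, Formula.and, ho, hn]
        cases v φ <;> cases v (conjList m) <;> simp)
    have : K45 (Formula.neg (conjList m)) := (t.mp hK₁').mp hK₂'
    exact hMF.2.2 m (fun ψ hψ => by
      rcases List.mem_append.mp hψ with h | h
      exacts [hl₁ ψ h, hl₂ ψ h]) this
  exact ⟨⟨M, hMCS⟩, hSM⟩

/-! ### MCS facts -/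

lemma mcs_not_both {Γ : CW} {φ : Formula} (h1 : φ ∈ Γ.val) (h2 : Formula.neg φ ∈ Γ.val) :
    False := by
  refine Γ.2.2.1 [φ, .neg φ] (by
    intro ψ hψ; rcases List.mem_cons.mp hψ with rfl | hψ
    · exact h1
    · simp at hψ; exact hψ ▸ h2) (K45.taut ?_)
  intro v hn ho hf
  simp only [conjList, Formula.imp, Formula.and, ho, hn, hf]
  cases v φ <;> simp

lemma mcs_closed {Γ : CW} {l : List Formula} (hl : ∀ ψ ∈ l, ψ ∈ Γ.val) {φ : Formula}
    (hφb : basic φ) (h : K45 ((conjList l).imp φ)) : φ ∈ Γ.val := by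
  rcases Γ.2.2.2 φ hφb with hin | hout
  · exact hin
  exfalso
  refine Γ.2.2.1 (Formula.neg φ :: l) (by
    intro ψ hψ; rcases List.mem_cons.mp hψ with rfl | hψ
    exacts [hout, hl ψ hψ]) ?_
  have t : K45 (((conjList l).imp φ).imp (.neg (conjList (Formula.neg φ :: l)))) :=
    K45.taut (by
      intro v hn ho hf
      simp only [conjList, Formula.imp, Formula.and, ho, hn]
      cases v φ <;> cases v (conjList l) <;> simp)
  exact t.mp h

lemma mcs_mp {Γ : CW} {φ ψ : Formula} (hφ : φ ∈ Γ.val) (hψb : basic ψ)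
    (h : K45 (φ.imp ψ)) : ψ ∈ Γ.val := by
  refine mcs_closed (l := [φ]) (by simpa using hφ) hψb (k45_imp_trans ?_ h)
  exact K45.taut (by
    intro v hn ho hf
    simp only [conjList, Formula.imp, Formula.and, ho, hn, hf]
    cases v φ <;> simp)

lemma mcs_basic {Γ : CW} {φ : Formula} (h : φ ∈ Γ.val) : basic φ := Γ.2.1 φ h

/-! ### Boxed conjunctions -/

lemma k45_and_imp {A B D X : Formula} (h1 : K45 (A.imp (B.imp D))) (h2 : K45 (X.imp B)) :
    K45 ((A.and X).imp D) := by
  have t : K45 ((A.imp (B.imp D)).imp ((X.imp B).imp ((A.and X).imp D))) := K45.taut (by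
    intro v hn ho hf
    simp only [Formula.imp, Formula.and, ho, hn]
    cases v A <;> cases v B <;> cases v D <;> cases v X <;> simp)
  exact (t.mp h1).mp h2

section Box

variable {box : Formula → Formula}
  (hK : ∀ a b : Formula, K45 ((box (a.imp b)).imp ((box a).imp (box b))))
  (hNec : ∀ {a : Formula}, K45 a → K45 (box a))

include hK hNec

lemma box_and (a c : Formula) : K45 ((box a).imp ((box c).imp (box (a.and c)))) := by
  have h0 : K45 (a.imp (c.imp (a.and c))) := K45.taut (by
    intro v hn ho hf
    simp only [Formula.imp, Formula.and, ho, hn]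
    cases v a <;> cases v c <;> simp)
  exact k45_imp_trans ((hK a (c.imp (a.and c))).mp (hNec h0)) (hK c (a.and c))

lemma conj_map_box (l : List Formula) :
    K45 ((conjList (l.map box)).imp (box (conjList l))) := by
  induction l with
  | nil => exact k45_imp_intro (hNec conj_nil_prov)
  | cons a l ih =>
    show K45 (((box a).and (conjList (l.map box))).imp (box (a.and (conjList l))))
    exact k45_and_imp (box_and hK hNec a (conjList l)) ih

lemma existence {Γ : CW} (hbb : ∀ β : Formula, basic (box β) ↔ basic β)
    {φ : Formula} (hφb : basic φ) (h : box φ ∉ Γ.val) :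
    ∃ Δ : CW, (∀ β, box β ∈ Γ.val → β ∈ Δ.val) ∧ Formula.neg φ ∈ Δ.val := by
  set S : Set Formula := insert (.neg φ) {β | box β ∈ Γ.val} with hS
  have hSb : ∀ ψ ∈ S, basic ψ := by
    rintro ψ (rfl | hψ)
    · exact hφb
    · exact (hbb ψ).mp (mcs_basic hψ)
  have hScons : ConsSet S := by
    intro l hl hKl
    set m := l.filter (· ≠ Formula.neg φ) with hmdef
    have hm : ∀ ψ ∈ m, box ψ ∈ Γ.val := by
      intro ψ hψ
      have h' := List.mem_filter.mp hψ
      rcases hl ψ h'.1 with h2 | h2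
      · simp at h'; exact absurd h2 h'.2
      · exact h2
    have hK' : K45 (Formula.neg (conjList (Formula.neg φ :: m))) := by
      refine k45_neg_of_imp (conj_subset fun ψ hψ => ?_) hKl
      by_cases hψφ : ψ = Formula.neg φ
      · simp [hψφ]
      · exact List.mem_cons_of_mem _ (List.mem_filter.mpr ⟨hψ, by simp [hψφ]⟩)
    have h1 : K45 ((conjList m).imp φ) := by
      have t : K45 ((Formula.neg (conjList (Formula.neg φ :: m))).imp
          ((conjList m).imp φ)) := K45.taut (by
        intro v hn ho hf
        simp only [conjList, Formula.imp, Formula.and, ho, hn]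
        cases v φ <;> cases v (conjList m) <;> simp)
      exact t.mp hK'
    have h3 : K45 ((conjList (m.map box)).imp (box φ)) :=
      k45_imp_trans (conj_map_box hK hNec m) ((hK _ _).mp (hNec h1))
    have : box φ ∈ Γ.val := by
      refine mcs_closed (l := m.map box) ?_ ((hbb φ).mpr hφb) h3
      intro ψ hψ
      obtain ⟨β, hβ, rfl⟩ := List.mem_map.mp hψ
      exact hm β hβ
    exact h this
  obtain ⟨Δ, hΔ⟩ := lindenbaum hSb hScons
  exact ⟨Δ, fun β hβ => hΔ (Set.mem_insert_of_mem _ hβ), hΔ (Set.mem_insert _ _)⟩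

end Box

/-! ### Truth lemma -/

lemma truth : ∀ (φ : Formula), basic φ → ∀ Γ : CW, (φ ∈ Γ.val ↔ csat Γ φ) := by
  intro φ
  induction φ with
  | atom p => intro _ Γ; exact Iff.rfl
  | fls =>
    intro _ Γ
    simp only [csat, iff_false]
    intro h
    refine Γ.2.2.1 [.fls] (by simpa using h) (K45.taut ?_)
    intro v hn ho hf
    simp only [conjList, Formula.and, ho, hn, hf]
    simp
  | neg α ih =>
    intro hb Γ
    have hα := ih hb Γ
    simp only [csat]
    rw [← hα]
    constructor
    · exact fun h hα' => mcs_not_both hα' h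
    · intro h
      rcases Γ.2.2.2 α hb with h1 | h1
      · exact absurd h1 h
      · exact h1
  | or α β ihα ihβ =>
    intro hb Γ
    simp only [csat]
    rw [← ihα hb.1 Γ, ← ihβ hb.2 Γ]
    constructor
    · intro h
      by_contra hcon
      push_neg at hcon
      have h1 : Formula.neg α ∈ Γ.val := by
        rcases Γ.2.2.2 α hb.1 with h1 | h1
        exacts [absurd h1 hcon.1, h1]
      have h2 : Formula.neg β ∈ Γ.val := by
        rcases Γ.2.2.2 β hb.2 with h2 | h2
        exacts [absurd h2 hcon.2, h2]
      refine Γ.2.2.1 [.or α β, .neg α, .neg β] ?_ (K45.taut ?_)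
      · intro ψ hψ
        rcases List.mem_cons.mp hψ with rfl | hψ
        · exact h
        rcases List.mem_cons.mp hψ with rfl | hψ
        · exact h1
        rcases List.mem_cons.mp hψ with rfl | hψ
        · exact h2
        · simp at hψ
      · intro v hn ho hf
        simp only [conjList, Formula.and, ho, hn, hf]
        cases v α <;> cases v β <;> simp
    · rintro (h | h)
      · refine mcs_mp h hb (K45.taut ?_)
        intro v hn ho hf
        simp only [Formula.imp, ho, hn]
        cases v α <;> cases v β <;> simp
      · refine mcs_mp h hb (K45.taut ?_)
        intro v hn ho hf
        simp only [Formula.imp, ho, hn]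
        cases v α <;> cases v β <;> simp
  | La α ih =>
    intro hb Γ
    simp only [csat]
    constructor
    · intro h Δ hΔ
      exact (ih hb Δ).mp (hΔ α h)
    · intro h
      by_contra hne
      obtain ⟨Δ, hRA, hnφ⟩ := existence (box := Formula.La) K45.kA
        (fun {_} h => K45.necA h) (fun _ => Iff.rfl) (φ := α) (show basic α from hb) hne
      exact mcs_not_both ((ih hb Δ).mpr (h Δ hRA)) hnφ
  | Lb α ih =>
    intro hb Γ
    simp only [csat]
    constructor
    · intro h Δ hΔ
      exact (ih hb Δ).mp (hΔ α h)
    · intro h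
      by_contra hne
      obtain ⟨Δ, hRB, hnφ⟩ := existence (box := Formula.Lb) K45.kB
        (fun {_} h => K45.necB h) (fun _ => Iff.rfl) (φ := α) (show basic α from hb) hne
      exact mcs_not_both ((ih hb Δ).mpr (h Δ hRB)) hnφ
  | Na α _ => intro hb; exact hb.elim
  | Nb α _ => intro hb; exact hb.elim

/-! ### The canonical relations are transitive and euclidean -/

lemma ra_trans {Γ Δ E : CW} (h1 : RA Γ Δ) (h2 : RA Δ E) : RA Γ E := by
  intro β hβ
  have hbβ : basic (Formula.La β) := mcs_basic hβ
  exact h2 β (h1 _ (mcs_mp hβ (show basic (Formula.La (Formula.La β)) from hbβ) (K45.fourA β)))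

lemma ra_euclid {Γ Δ E : CW} (h1 : RA Γ Δ) (h2 : RA Γ E) : RA Δ E := by
  intro β hβ
  rcases Γ.2.2.2 (.La β) (mcs_basic hβ) with h | h
  · exact h2 β h
  · exact absurd hβ fun hβ' =>
      mcs_not_both hβ' (h1 _ (mcs_mp h (show basic (Formula.La (Formula.neg (Formula.La β))) from mcs_basic (φ := Formula.La β) hβ) (K45.fiveA β)))

lemma rb_trans {Γ Δ E : CW} (h1 : RB Γ Δ) (h2 : RB Δ E) : RB Γ E := by
  intro β hβ
  have hbβ : basic (Formula.Lb β) := mcs_basic hβ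
  exact h2 β (h1 _ (mcs_mp hβ (show basic (Formula.Lb (Formula.Lb β)) from hbβ) (K45.fourB β)))

lemma rb_euclid {Γ Δ E : CW} (h1 : RB Γ Δ) (h2 : RB Γ E) : RB Δ E := by
  intro β hβ
  rcases Γ.2.2.2 (.Lb β) (mcs_basic hβ) with h | h
  · exact h2 β h
  · exact absurd hβ fun hβ' =>
      mcs_not_both hβ' (h1 _ (mcs_mp h (show basic (Formula.Lb (Formula.neg (Formula.Lb β))) from mcs_basic (φ := Formula.Lb β) hβ) (K45.fiveB β)))

lemma mem_corr {ag : Bool} {k : ℕ} {Γ : CW} {p : World × KStr k} :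
    p ∈ corr ag (k+1) Γ ↔
      ∃ Δ : CW, (if ag then RA Γ Δ else RB Γ Δ) ∧ p.1 = wval Δ ∧ p.2 = corr (!ag) k Δ :=
  Iff.rfl

lemma corr_congr_a {Γ Δ : CW} (h : RA Γ Δ) : ∀ k, corr true k Γ = corr true k Δ := by
  intro k
  cases k with
  | zero => rfl
  | succ k =>
    refine Set.ext fun p => ?_
    show p ∈ corr true (k+1) Γ ↔ p ∈ corr true (k+1) Δ
    rw [mem_corr, mem_corr]
    constructor
    · rintro ⟨E, hE, h1, h2⟩
      exact ⟨E, by simp only [if_true] at hE ⊢; exact ra_euclid h hE, h1, h2⟩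
    · rintro ⟨E, hE, h1, h2⟩
      exact ⟨E, by simp only [if_true] at hE ⊢; exact ra_trans h hE, h1, h2⟩

lemma corr_congr_b {Γ Δ : CW} (h : RB Γ Δ) : ∀ k, corr false k Γ = corr false k Δ := by
  intro k
  cases k with
  | zero => rfl
  | succ k =>
    refine Set.ext fun p => ?_
    show p ∈ corr false (k+1) Γ ↔ p ∈ corr false (k+1) Δ
    rw [mem_corr, mem_corr]
    constructor
    · rintro ⟨E, hE, h1, h2⟩
      exact ⟨E, show RB Δ E from rb_euclid h hE, h1, h2⟩
    · rintro ⟨E, hE, h1, h2⟩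
      exact ⟨E, show RB Γ E from rb_trans h hE, h1, h2⟩

/-! ### Modal depth requirements -/

mutual
def mdA : Formula → ℕ
  | .atom _ => 0
  | .fls => 0
  | .neg α => mdA α
  | .or α β => max (mdA α) (mdA β)
  | .La α => max (mdA α) (mdB α + 1)
  | .Na α => max (mdA α) (mdB α + 1)
  | .Lb _ => 0
  | .Nb _ => 0
def mdB : Formula → ℕ
  | .atom _ => 0
  | .fls => 0
  | .neg α => mdB α
  | .or α β => max (mdB α) (mdB β)
  | .Lb α => max (mdB α) (mdA α + 1)
  | .Nb α => max (mdB α) (mdA α + 1)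
  | .La _ => 0
  | .Na _ => 0
end

lemma depth_pos : ∀ φ : Formula, 1 ≤ depthA φ ∧ 1 ≤ depthB φ := by
  intro φ
  induction φ <;> simp only [depthA, depthB] at * <;> omega

lemma md_le : ∀ φ : Formula,
    mdA φ ≤ depthA φ ∧ mdB φ ≤ depthB φ ∧ mdB φ + 1 ≤ depthA φ ∧ mdA φ + 1 ≤ depthB φ := by
  intro φ
  induction φ with
  | atom p => simp [mdA, mdB, depthA, depthB]
  | fls => simp [mdA, mdB, depthA, depthB]
  | neg α ih => simpa only [mdA, mdB, depthA, depthB] using ih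
  | or α β ihα ihβ =>
    simp only [mdA, mdB, depthA, depthB] at *
    omega
  | La α ih =>
    have := depth_pos α
    simp only [mdA, mdB, depthA, depthB] at *
    omega
  | Na α ih =>
    have := depth_pos α
    simp only [mdA, mdB, depthA, depthB] at *
    omega
  | Lb α ih =>
    have := depth_pos α
    simp only [mdA, mdB, depthA, depthB] at *
    omega
  | Nb α ih =>
    have := depth_pos α
    simp only [mdA, mdB, depthA, depthB] at *
    omega

/-! ### Correspondence lemma -/

lemma sat_La {k j : ℕ} {ea : KStr (k+1)} {eb : KStr j} {w : World} {α : Formula} :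
    sat (k+1) j ea eb w (.La α) ↔ ∀ p ∈ ea, sat (k+1) k ea p.2 p.1 α := by
  cases j <;> exact Iff.rfl

lemma sat_Lb {k j : ℕ} {ea : KStr k} {eb : KStr (j+1)} {w : World} {α : Formula} :
    sat k (j+1) ea eb w (.Lb α) ↔ ∀ p ∈ eb, sat j (j+1) p.2 eb p.1 α := by
  cases k <;> exact Iff.rfl

lemma corr_sat : ∀ (φ : Formula), basic φ → ∀ (k j : ℕ) (Γ : CW), mdA φ ≤ k → mdB φ ≤ j →
    (sat k j (corr true k Γ) (corr false j Γ) (wval Γ) φ ↔ csat Γ φ) := by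
  intro φ
  induction φ with
  | atom p =>
    intro _ k j Γ _ _
    rcases k with _ | k <;> rcases j with _ | j <;> exact Iff.rfl
  | fls =>
    intro _ k j Γ _ _
    rcases k with _ | k <;> rcases j with _ | j <;> exact Iff.rfl
  | neg α ih =>
    intro hb k j Γ hk hj
    simp only [mdA, mdB] at hk hj
    have h := ih hb k j Γ hk hj
    rcases k with _ | k <;> rcases j with _ | j <;>
      · show ¬ _ ↔ ¬ _
        rw [h]
  | or α β ihα ihβ =>
    intro hb k j Γ hk hj
    simp only [mdA, mdB] at hk hj
    have hα := ihα hb.1 k j Γ (le_trans (le_max_left _ _) hk) (le_trans (le_max_left _ _) hj)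
    have hβ := ihβ hb.2 k j Γ (le_trans (le_max_right _ _) hk) (le_trans (le_max_right _ _) hj)
    rcases k with _ | k <;> rcases j with _ | j <;>
      · show _ ∨ _ ↔ _ ∨ _
        rw [hα, hβ]
  | La α ih =>
    intro hb k j Γ hk hj
    simp only [mdA] at hk
    have hk1 : mdA α ≤ k := le_trans (le_max_left _ _) hk
    have hk2 : mdB α + 1 ≤ k := le_trans (le_max_right _ _) hk
    obtain ⟨k, rfl⟩ : ∃ k', k = k' + 1 := ⟨k - 1, by omega⟩
    rw [sat_La]
    simp only [csat]
    constructor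
    · intro h Δ hΔ
      have hmem : ((wval Δ, corr false k Δ) : World × KStr k) ∈ corr true (k+1) Γ :=
        mem_corr.mpr ⟨Δ, by simpa using hΔ, rfl, rfl⟩
      have hs := h _ hmem
      rw [corr_congr_a hΔ (k+1)] at hs
      exact (ih hb (k+1) k Δ (by omega) (by omega)).mp hs
    · rintro h ⟨w', e'⟩ hp
      obtain ⟨Δ, hΔ, h1, h2⟩ := mem_corr.mp hp
      simp only [if_true] at hΔ
      simp only at h1 h2
      subst h1; subst h2
      rw [corr_congr_a hΔ (k+1)]
      exact (ih hb (k+1) k Δ (by omega) (by omega)).mpr (h Δ hΔ)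
  | Lb α ih =>
    intro hb k j Γ hk hj
    simp only [mdB] at hj
    have hj1 : mdB α ≤ j := le_trans (le_max_left _ _) hj
    have hj2 : mdA α + 1 ≤ j := le_trans (le_max_right _ _) hj
    obtain ⟨j, rfl⟩ : ∃ j', j = j' + 1 := ⟨j - 1, by omega⟩
    rw [sat_Lb]
    simp only [csat]
    constructor
    · intro h Δ hΔ
      have hmem : ((wval Δ, corr true j Δ) : World × KStr j) ∈ corr false (j+1) Γ :=
        mem_corr.mpr ⟨Δ, by simpa using hΔ, rfl, rfl⟩
      have hs := h _ hmem
      rw [corr_congr_b hΔ (j+1)] at hs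
      exact (ih hb j (j+1) Δ (by omega) (by omega)).mp hs
    · rintro h ⟨w', e'⟩ hp
      obtain ⟨Δ, hΔ, h1, h2⟩ := mem_corr.mp hp
      have hΔ : RB Γ Δ := hΔ
      simp only at h1 h2
      subst h1; subst h2
      rw [corr_congr_b hΔ (j+1)]
      exact (ih hb j (j+1) Δ (by omega) (by omega)).mpr (h Δ hΔ)
  | Na α _ => intro hb; exact hb.elim
  | Nb α _ => intro hb; exact hb.elim

end Aux

/-- every K45_n-consistent basic formula of a-depth k and
b-depth j is satisfiable at some (k,j)-model. -/
theorem K45_consistent_satisfiable (α : Formula) (hb : basic α) (hm : ONLminus α)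
    (hc : ¬ K45 (Formula.neg α)) :
    ∃ (ea : KStr (depthA α)) (eb : KStr (depthB α)) (w : World),
      sat (depthA α) (depthB α) ea eb w α := by
  have hcons : ConsSet {α} := Aux.consSet_singleton hc
  obtain ⟨Γ, hΓ⟩ := Aux.lindenbaum (fun φ hφ => by
    rw [Set.mem_singleton_iff] at hφ; subst hφ; exact hb) hcons
  have hαΓ : α ∈ Γ.val := hΓ rfl
  have hcsat := (Aux.truth α hb Γ).mp hαΓ
  have hmd := Aux.md_le α
  exact ⟨corr true _ Γ, corr false _ Γ, wval Γ,
    (Aux.corr_sat α hb _ _ Γ (le_trans hmd.1 le_rfl) (le_trans hmd.2.1 le_rfl)).mpr hcsat⟩
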